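/- Let p*, p ≥ 1, 0 ≤ q* < p*, 0 ≤ q < p, and let P*(z) = I_k z^{p*} + P₁ z^{p*−1} + ⋯ + P_{p*}, Q*(z) = Q₀ z^{q*} + Q₁ z^{q*−1} + ⋯ + Q_{q*} with Q₀ ≠ 0, and P(z) = I_k z^p + A₁ z^{p−1} + ⋯ + A_p, Q(z) = C₀ + C₁ z + ⋯ + C_q z^q with C_q ≠ 0, all coefficients being k×k real matrices. Assume (P*,Q*) is left coprime and (P,Q) is right coprime, and that P*(z)⁻¹·Q*(z) = Q(z)·P(z)⁻¹ for every z ∈ ℂ with det P*(z) ≠ 0 and det P(z) ≠ 0. Then p = p*, q = q*, the leading coefficient Q₀ of Q* equals C_q, {z ∈ ℂ : det P*(z) = 0} = {z ∈ ℂ : det P(z) = 0}, and {z ∈ ℂ : det Q*(z) = 0} = {z ∈ ℂ : det Q(z) = 0}. -/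

import Mathlib

open Matrix

/-- Evaluation at `z ∈ ℂ` of `P(z) = I_k z^p + A₁ z^(p-1) + ⋯ + A_p` (here `A m = A_{m+1}`). -/
noncomputable def monicMatPolyEval {k : ℕ} (p : ℕ) (A : Fin p → Matrix (Fin k) (Fin k) ℝ)
    (z : ℂ) : Matrix (Fin k) (Fin k) ℂ :=
  z ^ p • (1 : Matrix (Fin k) (Fin k) ℂ) +
    ∑ m : Fin p, z ^ (p - 1 - (m : ℕ)) • (A m).map (algebraMap ℝ ℂ)

/-- Evaluation at `z ∈ ℂ` of `Q*(z) = Q₀ z^{q*} + Q₁ z^{q*-1} + ⋯ + Q_{q*}`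
(here `Q m = Q_m`). -/
noncomputable def maPolyEvalDesc {k : ℕ} (q : ℕ) (Q : Fin (q + 1) → Matrix (Fin k) (Fin k) ℝ)
    (z : ℂ) : Matrix (Fin k) (Fin k) ℂ :=
  ∑ m : Fin (q + 1), z ^ (q - (m : ℕ)) • (Q m).map (algebraMap ℝ ℂ)

/-- Evaluation at `z ∈ ℂ` of `Q(z) = C₀ + C₁ z + ⋯ + C_q z^q` (here `C m = C_m`). -/
noncomputable def maPolyEvalAsc {k : ℕ} (q : ℕ) (C : Fin (q + 1) → Matrix (Fin k) (Fin k) ℝ)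
    (z : ℂ) : Matrix (Fin k) (Fin k) ℂ :=
  ∑ m : Fin (q + 1), z ^ (m : ℕ) • (C m).map (algebraMap ℝ ℂ)

/-- The pair `(P, Q)` is right coprime: for every `z ∈ ℂ` the `2k × k` matrix obtained by
stacking `P(z)` on top of `Q(z)` has rank `k`. -/
def RightCoprimeEval {k : ℕ} (P Q : ℂ → Matrix (Fin k) (Fin k) ℂ) : Prop :=
  ∀ z : ℂ, (Matrix.fromRows (P z) (Q z)).rank = k

/-- The pair `(P*, Q*)` is left coprime: for every `z ∈ ℂ` the `k × 2k` matrix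
`(P*(z), Q*(z))` has rank `k`. -/
def LeftCoprimeEval {k : ℕ} (P Q : ℂ → Matrix (Fin k) (Fin k) ℂ) : Prop :=
  ∀ z : ℂ, (Matrix.fromCols (P z) (Q z)).rank = k

namespace MCARMA

open Polynomial

variable {k d : ℕ}

noncomputable def evalM (z : ℂ) (M : Matrix (Fin k) (Fin k) ℂ[X]) : Matrix (Fin k) (Fin k) ℂ :=
  M.map (Polynomial.evalRingHom z)

lemma evalM_mul (z : ℂ) (M N : Matrix (Fin k) (Fin k) ℂ[X]) :
    evalM z (M * N) = evalM z M * evalM z N := by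
  exact map_mul (RingHom.mapMatrix (Polynomial.evalRingHom z) : Matrix (Fin k) (Fin k) ℂ[X] →+* Matrix (Fin k) (Fin k) ℂ) M N

lemma evalM_mulVec (z : ℂ) (M : Matrix (Fin k) (Fin k) ℂ[X]) (v : Fin k → ℂ[X]) :
    (fun i => Polynomial.eval z ((M *ᵥ v) i)) = evalM z M *ᵥ (fun j => Polynomial.eval z (v j)) := by
  funext i
  simp [evalM, Matrix.mulVec, dotProduct, Polynomial.eval_finset_sum]

lemma det_evalM (z : ℂ) (M : Matrix (Fin k) (Fin k) ℂ[X]) :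
    (evalM z M).det = Polynomial.eval z M.det := by
  rw [evalM, ← RingHom.mapMatrix_apply, ← RingHom.map_det]
  rfl

/-- the torsion-descent lemma -/
lemma descend (A B : Matrix (Fin k) (Fin k) ℂ[X])
    (hrank : ∀ (z : ℂ) (x : Fin k → ℂ), evalM z A *ᵥ x = 0 → evalM z B *ᵥ x = 0 → x = 0) :
    ∀ (n : ℕ) (f : ℂ[X]), f ≠ 0 → f.natDegree ≤ n → ∀ (v w u : Fin k → ℂ[X]),
      A *ᵥ u = f • v → B *ᵥ u = f • w → ∃ u', A *ᵥ u' = v ∧ B *ᵥ u' = w := by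
  intro n
  induction n with
  | zero =>
    intro f hf hdeg v w u h1 h2
    obtain ⟨c, rfl⟩ := Polynomial.natDegree_eq_zero.mp (Nat.le_zero.mp hdeg)
    have hc : c ≠ 0 := fun h => hf (by simp [h])
    refine ⟨(Polynomial.C c⁻¹) • u, ?_, ?_⟩
    · rw [Matrix.mulVec_smul, h1, smul_smul, ← Polynomial.C_mul, inv_mul_cancel₀ hc]
      simp
    · rw [Matrix.mulVec_smul, h2, smul_smul, ← Polynomial.C_mul, inv_mul_cancel₀ hc]
      simp
  | succ n ih =>
    intro f hf hdeg v w u h1 h2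
    rcases le_or_gt f.natDegree n with hle | hgt
    · exact ih f hf hle v w u h1 h2
    -- natDegree f = n+1 ≥ 1, so f has a root
    have hdpos : 0 < f.degree := by
      have h' : 0 < f.natDegree := by omega
      exact Polynomial.natDegree_pos_iff_degree_pos.mp h'
    obtain ⟨z₀, hz₀⟩ := Complex.exists_root hdpos
    obtain ⟨g, hg⟩ := (Polynomial.dvd_iff_isRoot.mpr hz₀)
    have hXC : (X - Polynomial.C z₀) ≠ (0 : ℂ[X]) := Polynomial.X_sub_C_ne_zero z₀
    have hgne : g ≠ 0 := by rintro rfl; simp at hg; exact hf hg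
    have hgdeg : g.natDegree ≤ n := by
      have := Polynomial.natDegree_mul hXC hgne
      rw [← hg] at this
      simp [Polynomial.natDegree_X_sub_C] at this
      omega
    -- u vanishes at z₀
    have hu0 : (fun i => Polynomial.eval z₀ (u i)) = 0 := by
      apply hrank z₀
      · rw [← evalM_mulVec, h1]
        funext i
        simp [Pi.smul_apply, hz₀.eq_zero]
      · rw [← evalM_mulVec, h2]
        funext i
        simp [Pi.smul_apply, hz₀.eq_zero]
    have hdvd : ∀ i, (X - Polynomial.C z₀) ∣ u i := fun i =>
      Polynomial.dvd_iff_isRoot.mpr (by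
        have := congrFun hu0 i; simpa [Polynomial.IsRoot] using this)
    choose u₁ hu₁ using hdvd
    have hu₁e : u = (X - Polynomial.C z₀) • u₁ := by
      funext i; simpa using hu₁ i
    have key1 : (X - Polynomial.C z₀) • (A *ᵥ u₁) = (X - Polynomial.C z₀) • (g • v) := by
      rw [← Matrix.mulVec_smul, ← hu₁e, h1, hg, mul_smul]
    have key2 : (X - Polynomial.C z₀) • (B *ᵥ u₁) = (X - Polynomial.C z₀) • (g • w) := by
      rw [← Matrix.mulVec_smul, ← hu₁e, h2, hg, mul_smul]
    have c1 : A *ᵥ u₁ = g • v := by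
      funext i
      have := congrFun key1 i
      simpa using mul_left_cancel₀ hXC (by simpa [Pi.smul_apply, smul_eq_mul] using this)
    have c2 : B *ᵥ u₁ = g • w := by
      funext i
      have := congrFun key2 i
      simpa using mul_left_cancel₀ hXC (by simpa [Pi.smul_apply, smul_eq_mul] using this)
    exact ih g hgne hgdeg v w u₁ c1 c2




lemma bot_lt_cast (d : ℕ) : (⊥ : WithBot ℕ) < (d : WithBot ℕ) := by
  exact_mod_cast WithBot.bot_lt_coe d

lemma degree_le_pred {x : ℂ[X]} {d : ℕ} (h : x.degree < (d : WithBot ℕ)) :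
    x.degree ≤ ((d - 1 : ℕ) : WithBot ℕ) := by
  rcases eq_or_ne x 0 with rfl | hx
  · simp
  · rw [Polynomial.degree_eq_natDegree hx] at *
    have h1 : x.natDegree < d := by exact_mod_cast h
    exact_mod_cast Nat.le_sub_one_of_lt h1

lemma monic_small (A L : Matrix (Fin k) (Fin k) ℂ[X])
    (hA : A = (X : ℂ[X]) ^ d • 1 + L) (hL : ∀ i j, (L i j).degree < (d : WithBot ℕ))
    (u : Fin k → ℂ[X]) (hu : ∀ i, ((A *ᵥ u) i).degree < (d : WithBot ℕ)) : u = 0 := by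
  by_contra hne
  have hex : ∃ i, u i ≠ 0 := by
    by_contra h
    push_neg at h
    exact hne (funext fun i => h i)
  obtain ⟨i, hi⟩ := hex
  set t : Finset (Fin k) := Finset.univ.filter (fun j => u j ≠ 0) with hT
  have hit : i ∈ t := by simp [hT, hi]
  obtain ⟨i₀, hi₀t, hi₀⟩ := Finset.exists_mem_eq_sup t ⟨i, hit⟩ (fun j => (u j).natDegree)
  set D : ℕ := t.sup (fun j => (u j).natDegree) with hD
  have hui₀ : u i₀ ≠ 0 := by
    rw [hT] at hi₀t; exact (Finset.mem_filter.mp hi₀t).2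
  have hub : ∀ j, (u j).degree ≤ (D : WithBot ℕ) := by
    intro j
    rcases eq_or_ne (u j) 0 with h0 | h0
    · rw [h0, Polynomial.degree_zero]; exact bot_le
    · rw [Polynomial.degree_eq_natDegree h0]
      have : (u j).natDegree ≤ D := Finset.le_sup (f := fun j => (u j).natDegree)
        (by simp [hT, h0])
      exact_mod_cast this
  have hApp : (A *ᵥ u) i₀ = X ^ d * u i₀ + (L *ᵥ u) i₀ := by
    rw [hA, Matrix.add_mulVec, Matrix.smul_mulVec, Matrix.one_mulVec]
    simp [smul_eq_mul]
  have hdeg1 : (X ^ d * u i₀ : ℂ[X]).degree = ((d + D : ℕ) : WithBot ℕ) := by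
    rw [Polynomial.degree_mul, Polynomial.degree_X_pow, Polynomial.degree_eq_natDegree hui₀,
      ← hi₀]
    push_cast
    rfl
  have hdeg2 : ((L *ᵥ u) i₀).degree < ((d + D : ℕ) : WithBot ℕ) := by
    have hrw : (L *ᵥ u) i₀ = ∑ j, L i₀ j * u j := rfl
    rw [hrw]
    refine lt_of_le_of_lt (Polynomial.degree_sum_le _ _) ?_
    rw [Finset.sup_lt_iff (bot_lt_cast (d + D))]
    intro j _
    rcases eq_or_ne (u j) 0 with h0 | h0
    · rw [h0, mul_zero, Polynomial.degree_zero]; exact bot_lt_cast _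
    rcases eq_or_ne (L i₀ j) 0 with hl0 | hl0
    · rw [hl0, zero_mul, Polynomial.degree_zero]; exact bot_lt_cast _
    rw [Polynomial.degree_mul, Polynomial.degree_eq_natDegree h0,
      Polynomial.degree_eq_natDegree hl0]
    have h1 : (L i₀ j).natDegree < d := by
      have := hL i₀ j
      rw [Polynomial.degree_eq_natDegree hl0] at this
      exact_mod_cast this
    have h2 : (u j).natDegree ≤ D := Finset.le_sup (f := fun j => (u j).natDegree)
      (by simp [hT, h0])
    have : (L i₀ j).natDegree + (u j).natDegree < d + D := by omega
    exact_mod_cast this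
  have htot : ((A *ᵥ u) i₀).degree = ((d + D : ℕ) : WithBot ℕ) := by
    rw [hApp, add_comm (X ^ d * u i₀), Polynomial.degree_add_eq_right_of_degree_lt, hdeg1]
    rw [hdeg1]; exact hdeg2
  have hcon := hu i₀
  rw [htot] at hcon
  have : d + D < d := by exact_mod_cast hcon
  omega

lemma monic_mulVec_inj (A L : Matrix (Fin k) (Fin k) ℂ[X])
    (hA : A = (X : ℂ[X]) ^ d • 1 + L) (hL : ∀ i j, (L i j).degree < (d : WithBot ℕ))
    {x y : Fin k → ℂ[X]} (h : A *ᵥ x = A *ᵥ y) : x = y := by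
  have h0 : A *ᵥ (x - y) = 0 := by rw [Matrix.mulVec_sub, h, sub_self]
  have := monic_small A L hA hL (x - y) (by
    intro i; rw [h0]
    simpa using bot_lt_cast d)
  exact sub_eq_zero.mp this

lemma monic_det_ne_zero (A L : Matrix (Fin k) (Fin k) ℂ[X])
    (hA : A = (X : ℂ[X]) ^ d • 1 + L) (hL : ∀ i j, (L i j).degree < (d : WithBot ℕ)) :
    A.det ≠ 0 := by
  intro hdet
  obtain ⟨v, hv, hv0⟩ := Matrix.exists_mulVec_eq_zero_iff.mpr hdet
  exact hv (monic_small A L hA hL v (by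
    intro i; rw [hv0]
    simpa using bot_lt_cast d))

lemma monic_div (A L : Matrix (Fin k) (Fin k) ℂ[X])
    (hA : A = (X : ℂ[X]) ^ d • 1 + L) (hL : ∀ i j, (L i j).degree < (d : WithBot ℕ))
    (hd : 0 < d) :
    ∀ (n : ℕ) (v : Fin k → ℂ[X]), (∀ i, (v i).degree ≤ (n : WithBot ℕ)) →
      ∃ u, ∀ i, ((v - A *ᵥ u) i).degree < (d : WithBot ℕ) := by
  intro n
  induction n with
  | zero =>
    intro v hv
    refine ⟨0, fun i => ?_⟩
    rw [Matrix.mulVec_zero, sub_zero]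
    exact lt_of_le_of_lt (hv i) (by exact_mod_cast hd)
  | succ n ih =>
    intro v hv
    rcases lt_or_ge (n + 1) d with hlt | hge
    · refine ⟨0, fun i => ?_⟩
      rw [Matrix.mulVec_zero, sub_zero]
      exact lt_of_le_of_lt (hv i) (by exact_mod_cast hlt)
    · set u₀ : Fin k → ℂ[X] := fun i => Polynomial.monomial (n + 1 - d) ((v i).coeff (n + 1))
        with hu₀
      have hAu₀ : ∀ i, (A *ᵥ u₀) i
          = Polynomial.monomial (n + 1) ((v i).coeff (n + 1)) + (L *ᵥ u₀) i := by
        intro i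
        rw [hA, Matrix.add_mulVec, Matrix.smul_mulVec, Matrix.one_mulVec, Pi.add_apply]
        congr 1
        rw [Pi.smul_apply, smul_eq_mul, hu₀]
        simp only [Polynomial.X_pow_eq_monomial, Polynomial.monomial_mul_monomial, one_mul]
        rw [show d + (n + 1 - d) = n + 1 by omega]
      have hv' : ∀ i, ((v - A *ᵥ u₀) i).degree ≤ (n : WithBot ℕ) := by
        intro i
        have hsplit : (v - A *ᵥ u₀) i
            = (v i - Polynomial.monomial (n + 1) ((v i).coeff (n + 1))) - (L *ᵥ u₀) i := by
          rw [Pi.sub_apply, hAu₀ i]; ring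
        rw [hsplit]
        refine le_trans (Polynomial.degree_sub_le _ _) (max_le ?_ ?_)
        · rw [Polynomial.degree_le_iff_coeff_zero]
          intro m hm
          have hm' : n < m := by exact_mod_cast hm
          rw [Polynomial.coeff_sub, Polynomial.coeff_monomial]
          by_cases hem : n + 1 = m
          · rw [if_pos hem, ← hem]
            simp
          · rw [if_neg hem, sub_zero]
            exact Polynomial.coeff_eq_zero_of_degree_lt
              (lt_of_le_of_lt (hv i) (by exact_mod_cast by omega : ((n+1 : ℕ) : WithBot ℕ) < (m : WithBot ℕ)))
        · have hrw : (L *ᵥ u₀) i = ∑ j, L i j * u₀ j := rfl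
          rw [hrw]
          refine le_trans (Polynomial.degree_sum_le _ _) ?_
          rw [Finset.sup_le_iff]
          intro j _
          refine le_trans (Polynomial.degree_mul_le _ _) ?_
          refine le_trans (add_le_add (degree_le_pred (hL i j))
            (Polynomial.degree_monomial_le _ _)) ?_
          have : ((d - 1 : ℕ) : WithBot ℕ) + ((n + 1 - d : ℕ) : WithBot ℕ)
              = (((d - 1) + (n + 1 - d) : ℕ) : WithBot ℕ) := by push_cast; ring
          rw [this]
          exact_mod_cast by omega
      obtain ⟨u', hu'⟩ := ih (v - A *ᵥ u₀) hv'
      refine ⟨u₀ + u', fun i => ?_⟩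
      have : v - A *ᵥ (u₀ + u') = (v - A *ᵥ u₀) - A *ᵥ u' := by
        rw [Matrix.mulVec_add]; ring
      rw [this]
      exact hu' i




noncomputable def gmap (k d : ℕ) : (Fin k → Fin d → ℂ) →ₗ[ℂ] (Fin k → ℂ[X]) where
  toFun c := fun i => ∑ m : Fin d, Polynomial.monomial (m : ℕ) (c i m)
  map_add' c₁ c₂ := by
    funext i
    simp [Finset.sum_add_distrib]
  map_smul' a c := by
    funext i
    simp [Finset.smul_sum, Polynomial.smul_monomial]

lemma gmap_coeff (c : Fin k → Fin d → ℂ) (i : Fin k) (m : Fin d) :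
    ((gmap k d c) i).coeff (m : ℕ) = c i m := by
  simp only [gmap, LinearMap.coe_mk, AddHom.coe_mk, Polynomial.finset_sum_coeff,
    Polynomial.coeff_monomial]
  rw [Finset.sum_eq_single m]
  · simp
  · intro b _ hb
    rw [if_neg (fun h => hb (Fin.ext h))]
  · intro h
    exact absurd (Finset.mem_univ m) h

lemma gmap_degree_lt (hd : 0 < d) (c : Fin k → Fin d → ℂ) (i : Fin k) :
    ((gmap k d c) i).degree < (d : WithBot ℕ) := by
  simp only [gmap, LinearMap.coe_mk, AddHom.coe_mk]
  refine lt_of_le_of_lt (Polynomial.degree_sum_le _ _) ?_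
  rw [Finset.sup_lt_iff (by exact_mod_cast WithBot.bot_lt_coe d)]
  intro m _
  refine lt_of_le_of_lt (Polynomial.degree_monomial_le _ _) ?_
  exact_mod_cast m.isLt

lemma gmap_eq_of_degree_lt (r : Fin k → ℂ[X]) (hr : ∀ i, (r i).degree < (d : WithBot ℕ)) :
    gmap k d (fun i m => (r i).coeff (m : ℕ)) = r := by
  rcases Nat.eq_zero_or_pos d with rfl | hd
  · funext i
    have h0 : r i = 0 := by
      have h2 : (r i).degree < 0 := by exact_mod_cast hr i
      exact Polynomial.degree_eq_bot.mp (Nat.WithBot.lt_zero_iff.mp h2)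
    simp [gmap, h0]
  funext i
  apply Polynomial.ext
  intro n
  rcases lt_or_ge n d with hn | hn
  · have := gmap_coeff (fun i m => (r i).coeff (m : ℕ)) i ⟨n, hn⟩
    simpa using this
  · have h1 : ((gmap k d fun i m => (r i).coeff (m : ℕ)) i).degree < (n : WithBot ℕ) := by
      exact lt_of_lt_of_le (gmap_degree_lt hd _ i) (by exact_mod_cast hn)
    rw [Polynomial.coeff_eq_zero_of_degree_lt h1,
      Polynomial.coeff_eq_zero_of_degree_lt (lt_of_lt_of_le (hr i) (by exact_mod_cast hn))]
section Quot

variable (A L : Matrix (Fin k) (Fin k) ℂ[X])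

noncomputable def phiQ (A : Matrix (Fin k) (Fin k) ℂ[X]) (d : ℕ) :
    (Fin k → Fin d → ℂ) →ₗ[ℂ] ((Fin k → ℂ[X]) ⧸ LinearMap.range (Matrix.mulVecLin A)) where
  toFun c := Submodule.Quotient.mk (gmap k d c)
  map_add' c₁ c₂ := by
    show Submodule.Quotient.mk (gmap k d (c₁ + c₂)) = _
    rw [map_add, Submodule.Quotient.mk_add]
  map_smul' a c := by
    show Submodule.Quotient.mk (gmap k d (a • c)) = _
    rw [LinearMap.map_smul, Submodule.Quotient.mk_smul]
    rfl

lemma phiQ_bijective (hA : A = (X : ℂ[X]) ^ d • 1 + L)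
    (hL : ∀ i j, (L i j).degree < (d : WithBot ℕ)) (hd : 0 < d) :
    Function.Bijective (phiQ A d) := by
  constructor
  · rw [injective_iff_map_eq_zero]
    intro c hc
    rw [phiQ, LinearMap.coe_mk, AddHom.coe_mk] at hc
    obtain ⟨u, hu⟩ := (Submodule.Quotient.mk_eq_zero _).mp hc
    rw [Matrix.mulVecLin_apply] at hu
    have hu0 : u = 0 := monic_small A L hA hL u (by
      intro i; rw [hu]; exact gmap_degree_lt hd c i)
    rw [hu0, Matrix.mulVec_zero] at hu
    funext i m
    have := gmap_coeff c i m
    rw [← hu] at this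
    simpa using this.symm
  · intro x
    obtain ⟨v, rfl⟩ := Submodule.Quotient.mk_surjective _ x
    obtain ⟨u, hu⟩ := monic_div A L hA hL hd (Finset.univ.sup fun i => (v i).natDegree) v (by
      intro i
      refine le_trans (Polynomial.degree_le_natDegree) ?_
      exact_mod_cast Finset.le_sup (f := fun i => (v i).natDegree) (Finset.mem_univ i))
    refine ⟨fun i m => ((v - A *ᵥ u) i).coeff (m : ℕ), ?_⟩
    rw [phiQ, LinearMap.coe_mk, AddHom.coe_mk, gmap_eq_of_degree_lt _ hu]
    rw [show (Submodule.Quotient.mk v :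
        (Fin k → ℂ[X]) ⧸ LinearMap.range (Matrix.mulVecLin A)) = Submodule.Quotient.mk (v - A *ᵥ u)
      from ((Submodule.Quotient.eq _).mpr (by
        simpa using LinearMap.mem_range_self (Matrix.mulVecLin A) u))]

lemma monic_finrank (hA : A = (X : ℂ[X]) ^ d • 1 + L)
    (hL : ∀ i j, (L i j).degree < (d : WithBot ℕ)) (hd : 0 < d) :
    Module.finrank ℂ ((Fin k → ℂ[X]) ⧸ LinearMap.range (Matrix.mulVecLin A)) = k * d
    ∧ FiniteDimensional ℂ ((Fin k → ℂ[X]) ⧸ LinearMap.range (Matrix.mulVecLin A)) := by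
  have e := LinearEquiv.ofBijective (phiQ A d) (phiQ_bijective A L hA hL hd)
  constructor
  · rw [← LinearEquiv.finrank_eq e]
    rw [Module.finrank_pi_fintype]
    simp [Module.finrank_pi]
  · exact Module.Finite.equiv e

end Quot
section Inject

lemma quot_inj_map (A B A' B' : Matrix (Fin k) (Fin k) ℂ[X])
    (hrel : B' * A = A' * B)
    (hrank : ∀ (z : ℂ) (x : Fin k → ℂ), evalM z A *ᵥ x = 0 → evalM z B *ᵥ x = 0 → x = 0)
    (hdetA : A.det ≠ 0)
    (hA'inj : ∀ x y : Fin k → ℂ[X], A' *ᵥ x = A' *ᵥ y → x = y) :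
    ∃ θ : ((Fin k → ℂ[X]) ⧸ LinearMap.range (Matrix.mulVecLin A)) →ₗ[ℂ]
        ((Fin k → ℂ[X]) ⧸ LinearMap.range (Matrix.mulVecLin A')),
      Function.Injective θ := by
  have hle : LinearMap.range (Matrix.mulVecLin A)
      ≤ (LinearMap.range (Matrix.mulVecLin A')).comap (Matrix.mulVecLin B') := by
    rintro x ⟨u, rfl⟩
    refine Submodule.mem_comap.mpr ⟨B *ᵥ u, ?_⟩
    simp only [Matrix.mulVecLin_apply, Matrix.mulVec_mulVec]
    rw [← hrel, ← Matrix.mulVec_mulVec]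
  set θR := Submodule.mapQ _ _ (Matrix.mulVecLin B') hle with hθR
  have hker : ∀ v : Fin k → ℂ[X], θR (Submodule.Quotient.mk v) = 0 →
      (Submodule.Quotient.mk v :
        (Fin k → ℂ[X]) ⧸ LinearMap.range (Matrix.mulVecLin A)) = 0 := by
    intro v hv
    rw [hθR, Submodule.mapQ_apply, Submodule.Quotient.mk_eq_zero] at hv
    obtain ⟨w, hw⟩ := hv
    rw [Matrix.mulVecLin_apply] at hw
    set vt := A.adjugate *ᵥ v with hvt
    have h1 : A *ᵥ vt = A.det • v := by
      rw [hvt, Matrix.mulVec_mulVec, Matrix.mul_adjugate, Matrix.smul_mulVec,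
        Matrix.one_mulVec]
    have h2 : B *ᵥ vt = A.det • w := by
      apply hA'inj
      rw [Matrix.mulVec_mulVec, ← hrel, ← Matrix.mulVec_mulVec, h1, Matrix.mulVec_smul,
        Matrix.mulVec_smul, hw, Matrix.mulVecLin_apply]
    obtain ⟨u, hu, -⟩ := descend A B hrank A.det.natDegree A.det hdetA le_rfl v w vt h1 h2
    rw [Submodule.Quotient.mk_eq_zero]
    exact ⟨u, by rw [Matrix.mulVecLin_apply]; exact hu⟩
  refine ⟨θR.restrictScalars ℂ, ?_⟩
  rw [injective_iff_map_eq_zero]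
  intro x hx
  obtain ⟨v, rfl⟩ := Submodule.Quotient.mk_surjective _ x
  exact hker v hx

lemma dim_le (dA dA' : ℕ) (A LA A' LA' B B' : Matrix (Fin k) (Fin k) ℂ[X])
    (hA : A = (X : ℂ[X]) ^ dA • 1 + LA) (hLA : ∀ i j, (LA i j).degree < (dA : WithBot ℕ))
    (hdA : 0 < dA)
    (hA' : A' = (X : ℂ[X]) ^ dA' • 1 + LA')
    (hLA' : ∀ i j, (LA' i j).degree < (dA' : WithBot ℕ)) (hdA' : 0 < dA')
    (hrel : B' * A = A' * B)
    (hrank : ∀ (z : ℂ) (x : Fin k → ℂ), evalM z A *ᵥ x = 0 → evalM z B *ᵥ x = 0 → x = 0) :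
    k * dA ≤ k * dA' := by
  obtain ⟨θ, hθ⟩ := quot_inj_map A B A' B' hrel hrank
    (monic_det_ne_zero A LA hA hLA)
    (fun x y h => monic_mulVec_inj A' LA' hA' hLA' h)
  obtain ⟨hfr, hfin⟩ := monic_finrank A LA hA hLA hdA
  obtain ⟨hfr', hfin'⟩ := monic_finrank A' LA' hA' hLA' hdA'
  rw [← hfr, ← hfr']
  exact LinearMap.finrank_le_finrank_of_injective hθ

end Inject
section Rank

lemma rank_stack_inj (M N : Matrix (Fin k) (Fin k) ℂ) (h : (Matrix.fromRows M N).rank = k)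
    (x : Fin k → ℂ) (hM : M *ᵥ x = 0) (hN : N *ᵥ x = 0) : x = 0 := by
  have hker : LinearMap.ker (Matrix.fromRows M N).mulVecLin = ⊥ := by
    have h1 := LinearMap.finrank_range_add_finrank_ker (Matrix.fromRows M N).mulVecLin
    rw [show LinearMap.range (Matrix.fromRows M N).mulVecLin
        = LinearMap.range (Matrix.fromRows M N).mulVecLin from rfl] at h1
    have h2 : Module.finrank ℂ (Fin k → ℂ) = k := Module.finrank_fin_fun ℂ
    rw [h2] at h1
    have h3 : Module.finrank ℂ (LinearMap.range (Matrix.fromRows M N).mulVecLin) = k := h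
    rw [h3] at h1
    exact Submodule.finrank_eq_zero.mp (by omega)
  have hx : x ∈ LinearMap.ker (Matrix.fromRows M N).mulVecLin := by
    rw [LinearMap.mem_ker, Matrix.mulVecLin_apply, Matrix.fromRows_mulVec, hM, hN]
    funext i
    cases i <;> rfl
  rw [hker] at hx
  exact hx

lemma rank_cols_inj (M N : Matrix (Fin k) (Fin k) ℂ) (h : (Matrix.fromCols M N).rank = k)
    (x : Fin k → ℂ) (hM : Mᵀ *ᵥ x = 0) (hN : Nᵀ *ᵥ x = 0) : x = 0 := by
  apply rank_stack_inj Mᵀ Nᵀ _ x hM hN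
  rw [← Matrix.transpose_fromCols, Matrix.rank_transpose]
  exact h

end Rank

section MatPolys

variable {pp qq : ℕ}

noncomputable def toC (M : Matrix (Fin k) (Fin k) ℝ) : Matrix (Fin k) (Fin k) ℂ[X] :=
  M.map (fun x => Polynomial.C (x : ℂ))

noncomputable def Lmat (p : ℕ) (A : Fin p → Matrix (Fin k) (Fin k) ℝ) :
    Matrix (Fin k) (Fin k) ℂ[X] :=
  ∑ m : Fin p, (X : ℂ[X]) ^ (p - 1 - (m : ℕ)) • toC (A m)

noncomputable def Pmat (p : ℕ) (A : Fin p → Matrix (Fin k) (Fin k) ℝ) :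
    Matrix (Fin k) (Fin k) ℂ[X] :=
  (X : ℂ[X]) ^ p • 1 + Lmat p A

noncomputable def Qdesc (q : ℕ) (Q : Fin (q + 1) → Matrix (Fin k) (Fin k) ℝ) :
    Matrix (Fin k) (Fin k) ℂ[X] :=
  ∑ m : Fin (q + 1), (X : ℂ[X]) ^ (q - (m : ℕ)) • toC (Q m)

noncomputable def Qasc (q : ℕ) (Q : Fin (q + 1) → Matrix (Fin k) (Fin k) ℝ) :
    Matrix (Fin k) (Fin k) ℂ[X] :=
  ∑ m : Fin (q + 1), (X : ℂ[X]) ^ (m : ℕ) • toC (Q m)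

lemma evalM_Pmat (z : ℂ) (p : ℕ) (A : Fin p → Matrix (Fin k) (Fin k) ℝ) :
    evalM z (Pmat p A) = monicMatPolyEval p A z := by
  ext i j
  simp [evalM, Pmat, Lmat, toC, monicMatPolyEval, Matrix.map_apply, Matrix.add_apply,
    Matrix.sum_apply, Matrix.smul_apply, smul_eq_mul, Polynomial.eval_finset_sum,
    Matrix.one_apply, apply_ite, Complex.coe_algebraMap]
  exact Finset.sum_congr rfl fun x _ => mul_comm _ _

lemma evalM_Qdesc (z : ℂ) (q : ℕ) (Q : Fin (q + 1) → Matrix (Fin k) (Fin k) ℝ) :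
    evalM z (Qdesc q Q) = maPolyEvalDesc q Q z := by
  ext i j
  simp [evalM, Qdesc, toC, maPolyEvalDesc, Matrix.map_apply,
    Matrix.sum_apply, Matrix.smul_apply, smul_eq_mul, Polynomial.eval_finset_sum,
    Complex.coe_algebraMap]
  exact Finset.sum_congr rfl fun x _ => mul_comm _ _

lemma evalM_Qasc (z : ℂ) (q : ℕ) (Q : Fin (q + 1) → Matrix (Fin k) (Fin k) ℝ) :
    evalM z (Qasc q Q) = maPolyEvalAsc q Q z := by
  ext i j
  simp [evalM, Qasc, toC, maPolyEvalAsc, Matrix.map_apply,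
    Matrix.sum_apply, Matrix.smul_apply, smul_eq_mul, Polynomial.eval_finset_sum,
    Complex.coe_algebraMap]
  exact Finset.sum_congr rfl fun x _ => mul_comm _ _

lemma Lmat_degree (p : ℕ) (hp : 0 < p) (A : Fin p → Matrix (Fin k) (Fin k) ℝ) (i j : Fin k) :
    ((Lmat p A) i j).degree < (p : WithBot ℕ) := by
  rw [Lmat, Matrix.sum_apply]
  refine lt_of_le_of_lt (Polynomial.degree_sum_le _ _) ?_
  rw [Finset.sup_lt_iff (bot_lt_cast p)]
  intro m _
  rw [Matrix.smul_apply, smul_eq_mul]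
  refine lt_of_le_of_lt (Polynomial.degree_mul_le _ _) ?_
  refine lt_of_le_of_lt (add_le_add (Polynomial.degree_X_pow_le _) (Polynomial.degree_C_le)) ?_
  rw [add_zero]
  exact_mod_cast (by omega : p - 1 - (m : ℕ) < p)

end MatPolys
section Coeffs

lemma coeff_mul_top (a b : ℂ[X]) (da db : ℕ) (ha : a.degree ≤ (da : WithBot ℕ))
    (hb : b.degree ≤ (db : WithBot ℕ)) :
    (a * b).coeff (da + db) = a.coeff da * b.coeff db := by
  rw [Polynomial.coeff_mul, Finset.sum_eq_single (da, db)]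
  · rintro ⟨x, y⟩ hxy hne
    rw [Finset.HasAntidiagonal.mem_antidiagonal] at hxy
    rcases lt_or_ge da x with hx | hx
    · rw [Polynomial.coeff_eq_zero_of_degree_lt (lt_of_le_of_lt ha (by exact_mod_cast hx)),
        zero_mul]
    · have hy : db < y := by
        rcases lt_or_eq_of_le hx with h | h
        · omega
        · exfalso; apply hne; rw [h]; simp; omega
      rw [Polynomial.coeff_eq_zero_of_degree_lt (lt_of_le_of_lt hb (by exact_mod_cast hy)),
        mul_zero]
  · intro h
    exact absurd (Finset.HasAntidiagonal.mem_antidiagonal.mpr (rfl : da + db = da + db)) h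

lemma coeff_matmul_high (M N : Matrix (Fin k) (Fin k) ℂ[X]) (dM dN : ℕ)
    (hM : ∀ i j, (M i j).degree ≤ (dM : WithBot ℕ)) (hN : ∀ i j, (N i j).degree ≤ (dN : WithBot ℕ))
    (n : ℕ) (hn : dM + dN < n) (i j : Fin k) : ((M * N) i j).coeff n = 0 := by
  rw [Matrix.mul_apply, Polynomial.finset_sum_coeff]
  refine Finset.sum_eq_zero fun l _ => ?_
  refine Polynomial.coeff_eq_zero_of_degree_lt (lt_of_le_of_lt (Polynomial.degree_mul_le _ _) ?_)
  refine lt_of_le_of_lt (add_le_add (hM i l) (hN l j)) ?_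
  rw [show ((dM : WithBot ℕ) + (dN : WithBot ℕ)) = ((dM + dN : ℕ) : WithBot ℕ) by push_cast; ring]
  exact_mod_cast hn

lemma coeff_matmul_top (M N : Matrix (Fin k) (Fin k) ℂ[X]) (dM dN : ℕ)
    (hM : ∀ i j, (M i j).degree ≤ (dM : WithBot ℕ)) (hN : ∀ i j, (N i j).degree ≤ (dN : WithBot ℕ))
    (i j : Fin k) :
    ((M * N) i j).coeff (dM + dN) = ∑ l, (M i l).coeff dM * (N l j).coeff dN := by
  rw [Matrix.mul_apply, Polynomial.finset_sum_coeff]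
  exact Finset.sum_congr rfl fun l _ => coeff_mul_top _ _ _ _ (hM i l) (hN l j)

lemma Qdesc_entry (q : ℕ) (Q : Fin (q + 1) → Matrix (Fin k) (Fin k) ℝ) (i j : Fin k) :
    (Qdesc q Q) i j = ∑ m : Fin (q + 1), Polynomial.monomial (q - (m : ℕ)) ((Q m i j : ℝ) : ℂ) := by
  rw [Qdesc, Matrix.sum_apply]
  refine Finset.sum_congr rfl fun m _ => ?_
  rw [Matrix.smul_apply, smul_eq_mul, toC, Matrix.map_apply, mul_comm,
    Polynomial.C_mul_X_pow_eq_monomial]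

lemma Qasc_entry (q : ℕ) (Q : Fin (q + 1) → Matrix (Fin k) (Fin k) ℝ) (i j : Fin k) :
    (Qasc q Q) i j = ∑ m : Fin (q + 1), Polynomial.monomial (m : ℕ) ((Q m i j : ℝ) : ℂ) := by
  rw [Qasc, Matrix.sum_apply]
  refine Finset.sum_congr rfl fun m _ => ?_
  rw [Matrix.smul_apply, smul_eq_mul, toC, Matrix.map_apply, mul_comm,
    Polynomial.C_mul_X_pow_eq_monomial]

lemma Qdesc_degree (q : ℕ) (Q : Fin (q + 1) → Matrix (Fin k) (Fin k) ℝ) (i j : Fin k) :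
    ((Qdesc q Q) i j).degree ≤ (q : WithBot ℕ) := by
  rw [Qdesc_entry]
  refine le_trans (Polynomial.degree_sum_le _ _) ?_
  rw [Finset.sup_le_iff]
  intro m _
  refine le_trans (Polynomial.degree_monomial_le _ _) ?_
  exact_mod_cast Nat.sub_le q (m : ℕ)

lemma Qasc_degree (q : ℕ) (Q : Fin (q + 1) → Matrix (Fin k) (Fin k) ℝ) (i j : Fin k) :
    ((Qasc q Q) i j).degree ≤ (q : WithBot ℕ) := by
  rw [Qasc_entry]
  refine le_trans (Polynomial.degree_sum_le _ _) ?_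
  rw [Finset.sup_le_iff]
  intro m _
  refine le_trans (Polynomial.degree_monomial_le _ _) ?_
  exact_mod_cast Nat.lt_succ_iff.mp m.isLt

lemma Qdesc_coeff_top (q : ℕ) (Q : Fin (q + 1) → Matrix (Fin k) (Fin k) ℝ) (i j : Fin k) :
    ((Qdesc q Q) i j).coeff q = ((Q 0 i j : ℝ) : ℂ) := by
  rw [Qdesc_entry, Polynomial.finset_sum_coeff, Finset.sum_eq_single (0 : Fin (q + 1))]
  · simp
  · intro m _ hm
    rw [Polynomial.coeff_monomial, if_neg]
    intro h
    apply hm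
    have h1 : (m : ℕ) < q + 1 := m.isLt
    have h2 : (m : ℕ) = 0 := by omega
    exact Fin.ext h2
  · intro h
    exact absurd (Finset.mem_univ _) h

lemma Qasc_coeff_top (q : ℕ) (Q : Fin (q + 1) → Matrix (Fin k) (Fin k) ℝ) (i j : Fin k) :
    ((Qasc q Q) i j).coeff q = ((Q (Fin.last q) i j : ℝ) : ℂ) := by
  rw [Qasc_entry, Polynomial.finset_sum_coeff, Finset.sum_eq_single (Fin.last q)]
  · simp
  · intro m _ hm
    rw [Polynomial.coeff_monomial, if_neg]
    intro h
    exact hm (Fin.ext (by simpa using h))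
  · intro h
    exact absurd (Finset.mem_univ _) h

lemma Pmat_degree (p : ℕ) (hp : 0 < p) (A : Fin p → Matrix (Fin k) (Fin k) ℝ) (i j : Fin k) :
    ((Pmat p A) i j).degree ≤ (p : WithBot ℕ) := by
  rw [Pmat, Matrix.add_apply]
  refine le_trans (Polynomial.degree_add_le _ _) (max_le ?_ (le_of_lt (Lmat_degree p hp A i j)))
  rw [Matrix.smul_apply, smul_eq_mul]
  have h1 : ((1 : Matrix (Fin k) (Fin k) ℂ[X]) i j).degree ≤ (0 : WithBot ℕ) := by
    rcases eq_or_ne i j with rfl | hne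
    · rw [Matrix.one_apply_eq]; exact Polynomial.degree_one_le
    · rw [Matrix.one_apply_ne hne, Polynomial.degree_zero]; exact bot_le
  refine le_trans (Polynomial.degree_mul_le _ _) ?_
  refine le_trans (add_le_add (Polynomial.degree_X_pow_le _) h1) ?_
  rw [add_zero]

lemma Pmat_coeff_top (p : ℕ) (hp : 0 < p) (A : Fin p → Matrix (Fin k) (Fin k) ℝ) (i j : Fin k) :
    ((Pmat p A) i j).coeff p = if i = j then 1 else 0 := by
  rw [Pmat, Matrix.add_apply, Polynomial.coeff_add,
    Polynomial.coeff_eq_zero_of_degree_lt (Lmat_degree p hp A i j), add_zero,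
    Matrix.smul_apply, smul_eq_mul]
  rcases eq_or_ne i j with rfl | hne
  · simp [Matrix.one_apply, Polynomial.coeff_X_pow]
  · simp [Matrix.one_apply, hne]

end Coeffs
lemma evalM_transpose (z : ℂ) (M : Matrix (Fin k) (Fin k) ℂ[X]) :
    evalM z Mᵀ = (evalM z M)ᵀ := rfl

lemma transpose_Pmat (p : ℕ) (A : Fin p → Matrix (Fin k) (Fin k) ℝ) :
    (Pmat p A)ᵀ = (X : ℂ[X]) ^ p • 1 + (Lmat p A)ᵀ := by
  rw [Pmat, Matrix.transpose_add, Matrix.transpose_smul, Matrix.transpose_one]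

end MCARMA

open MCARMA Polynomial in
/-- Connection between the MCARMA polynomials `(P*, Q*)` and the coprime right polynomial
fraction description `(P, Q)` of the transfer function: if `(P*, Q*)` is left coprime,
`(P, Q)` is right coprime and `P*(z)⁻¹ Q*(z) = Q(z) P(z)⁻¹` whenever both determinants are
nonzero, then `p = p*`, `q = q*`, `Q₀ = C_q`, `𝒩(P*) = 𝒩(P)` and `𝒩(Q*) = 𝒩(Q)`. -/
theorem mcarma_fraction_description {k pstar p qstar q : ℕ}
    (hpstar : 1 ≤ pstar) (hp : 1 ≤ p) (hqstar : qstar < pstar) (hq : q < p)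
    (Ps : Fin pstar → Matrix (Fin k) (Fin k) ℝ)
    (Qs : Fin (qstar + 1) → Matrix (Fin k) (Fin k) ℝ)
    (A : Fin p → Matrix (Fin k) (Fin k) ℝ)
    (C : Fin (q + 1) → Matrix (Fin k) (Fin k) ℝ)
    (hQ0 : Qs 0 ≠ 0) (hCq : C (Fin.last q) ≠ 0)
    (hleft : LeftCoprimeEval (monicMatPolyEval pstar Ps) (maPolyEvalDesc qstar Qs))
    (hright : RightCoprimeEval (monicMatPolyEval p A) (maPolyEvalAsc q C))
    (heq : ∀ z : ℂ, (monicMatPolyEval pstar Ps z).det ≠ 0 → (monicMatPolyEval p A z).det ≠ 0 →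
      (monicMatPolyEval pstar Ps z)⁻¹ * maPolyEvalDesc qstar Qs z =
        maPolyEvalAsc q C z * (monicMatPolyEval p A z)⁻¹) :
    p = pstar ∧ q = qstar ∧ Qs 0 = C (Fin.last q) ∧
      {z : ℂ | (monicMatPolyEval pstar Ps z).det = 0} =
        {z : ℂ | (monicMatPolyEval p A z).det = 0} ∧
      {z : ℂ | (maPolyEvalDesc qstar Qs z).det = 0} =
        {z : ℂ | (maPolyEvalAsc q C z).det = 0} := by
  classical
  have hk : 0 < k := by
    rcases Nat.eq_zero_or_pos k with rfl | hk
    · exact absurd (by ext i j; exact i.elim0) hQ0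
    · exact hk
  set Pm := Pmat p A with hPm
  set Psm := Pmat pstar Ps with hPsm
  set Qm := Qasc q C with hQm
  set Qsm := Qdesc qstar Qs with hQsm
  have hdetPm : Pm.det ≠ 0 := monic_det_ne_zero _ (Lmat p A) rfl (Lmat_degree p hp A)
  have hdetPsm : Psm.det ≠ 0 :=
    monic_det_ne_zero _ (Lmat pstar Ps) rfl (Lmat_degree pstar hpstar Ps)
  -- rank conditions translated
  have hrankR : ∀ (z : ℂ) (x : Fin k → ℂ),
      evalM z Pm *ᵥ x = 0 → evalM z Qm *ᵥ x = 0 → x = 0 := by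
    intro z x h1 h2
    rw [hPm, evalM_Pmat] at h1
    rw [hQm, evalM_Qasc] at h2
    exact rank_stack_inj _ _ (hright z) x h1 h2
  have hrankL : ∀ (z : ℂ) (x : Fin k → ℂ),
      evalM z Psmᵀ *ᵥ x = 0 → evalM z Qsmᵀ *ᵥ x = 0 → x = 0 := by
    intro z x h1 h2
    rw [hPsm, evalM_transpose, evalM_Pmat] at h1
    rw [hQsm, evalM_transpose, evalM_Qdesc] at h2
    exact rank_cols_inj _ _ (hleft z) x h1 h2
  -- pointwise matrix identity at good points
  have hpoint : ∀ z : ℂ, Polynomial.eval z Pm.det ≠ 0 → Polynomial.eval z Psm.det ≠ 0 →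
      maPolyEvalDesc qstar Qs z * monicMatPolyEval p A z
        = monicMatPolyEval pstar Ps z * maPolyEvalAsc q C z := by
    intro z hP hPs
    have hdP : (monicMatPolyEval p A z).det ≠ 0 := by
      rw [← evalM_Pmat, det_evalM]; exact hP
    have hdPs : (monicMatPolyEval pstar Ps z).det ≠ 0 := by
      rw [← evalM_Pmat, det_evalM]; exact hPs
    have hm := heq z hdPs hdP
    have h3 := congrArg
      (fun M => monicMatPolyEval pstar Ps z * M * monicMatPolyEval p A z) hm
    rw [← Matrix.mul_assoc, Matrix.mul_nonsing_inv _ (isUnit_iff_ne_zero.mpr hdPs),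
      Matrix.one_mul] at h3
    rw [Matrix.mul_assoc (monicMatPolyEval pstar Ps z), Matrix.mul_assoc (maPolyEvalAsc q C z),
      Matrix.nonsing_inv_mul _ (isUnit_iff_ne_zero.mpr hdP), Matrix.mul_one] at h3
    exact h3
  -- polynomial identity
  have hrel : Qsm * Pm = Psm * Qm := by
    have hfin : ({z : ℂ | Polynomial.IsRoot Pm.det z} ∪
        {z : ℂ | Polynomial.IsRoot Psm.det z}).Finite :=
      (Polynomial.finite_setOf_isRoot hdetPm).union (Polynomial.finite_setOf_isRoot hdetPsm)
    refine Matrix.ext fun i j => ?_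
    apply Polynomial.eq_of_infinite_eval_eq
    apply (Set.Finite.infinite_compl hfin).mono
    intro z hz
    simp only [Set.mem_compl_iff, Set.mem_union, Set.mem_setOf_eq, not_or] at hz
    have h2 := hpoint z hz.1 hz.2
    have e1 : evalM z (Qsm * Pm) = evalM z (Psm * Qm) := by
      rw [evalM_mul, evalM_mul, hPm, hPsm, hQm, hQsm, evalM_Pmat, evalM_Qdesc, evalM_Pmat,
        evalM_Qasc]
      exact h2
    have := congrArg (fun M => M i j) e1
    simpa [evalM, Matrix.map_apply] using this
  -- coefficient comparison
  have htopQP : ∀ i j, ((Qsm * Pm) i j).coeff (qstar + p) = ((Qs 0 i j : ℝ) : ℂ) := by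
    intro i j
    rw [hQsm, hPm, coeff_matmul_top (Qdesc qstar Qs) (Pmat p A) qstar p
      (Qdesc_degree qstar Qs) (Pmat_degree p hp A)]
    simp [Qdesc_coeff_top, Pmat_coeff_top p hp A, mul_ite]
  have htopPQ : ∀ i j, ((Psm * Qm) i j).coeff (pstar + q) = ((C (Fin.last q) i j : ℝ) : ℂ) := by
    intro i j
    rw [hQm, hPsm, coeff_matmul_top (Pmat pstar Ps) (Qasc q C) pstar q
      (Pmat_degree pstar hpstar Ps) (Qasc_degree q C)]
    simp [Qasc_coeff_top, Pmat_coeff_top pstar hpstar Ps, ite_mul]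
  have heqd : qstar + p = pstar + q := by
    rcases lt_trichotomy (qstar + p) (pstar + q) with hlt | heqd | hgt
    · exfalso
      apply hCq
      ext i j
      have h1 := htopPQ i j
      rw [← hrel, hQsm, hPm, coeff_matmul_high (Qdesc qstar Qs) (Pmat p A) qstar p
        (Qdesc_degree qstar Qs) (Pmat_degree p hp A) (pstar + q) hlt] at h1
      exact_mod_cast h1.symm
    · exact heqd
    · exfalso
      apply hQ0
      ext i j
      have h1 := htopQP i j
      rw [hrel, hQm, hPsm, coeff_matmul_high (Pmat pstar Ps) (Qasc q C) pstar q
        (Pmat_degree pstar hpstar Ps) (Qasc_degree q C) (qstar + p) hgt] at h1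
      exact_mod_cast h1.symm
  -- main case
  have hQ0Cq : Qs 0 = C (Fin.last q) := by
    ext i j
    have h1 := htopQP i j
    rw [hrel, heqd] at h1
    have h2 := htopPQ i j
    rw [h1] at h2
    exact_mod_cast h2
  have hle1 : k * p ≤ k * pstar := by
    refine dim_le p pstar Pm (Lmat p A) Psm (Lmat pstar Ps) Qm Qsm rfl (Lmat_degree p hp A) hp
      rfl (Lmat_degree pstar hpstar Ps) hpstar hrel hrankR
  have hrelT : Qmᵀ * Psmᵀ = Pmᵀ * Qsmᵀ := by
    rw [← Matrix.transpose_mul, ← Matrix.transpose_mul, hrel]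
  have hle2 : k * pstar ≤ k * p := by
    refine dim_le pstar p Psmᵀ (Lmat pstar Ps)ᵀ Pmᵀ (Lmat p A)ᵀ Qsmᵀ Qmᵀ
      (by rw [hPsm]; exact transpose_Pmat pstar Ps)
      (fun i j => Lmat_degree pstar hpstar Ps j i) hpstar
      (by rw [hPm]; exact transpose_Pmat p A)
      (fun i j => Lmat_degree p hp A j i) hp hrelT hrankL
  have hppstar : p = pstar := Nat.eq_of_mul_eq_mul_left hk (le_antisymm hle1 hle2)
  have hqqstar : q = qstar := by omega
  -- evaluated relation, for the set equalities
  have hrelz : ∀ z : ℂ, maPolyEvalDesc qstar Qs z * monicMatPolyEval p A z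
      = monicMatPolyEval pstar Ps z * maPolyEvalAsc q C z := by
    intro z
    have e1 : evalM z (Qsm * Pm) = evalM z (Psm * Qm) := by rw [hrel]
    rw [evalM_mul, evalM_mul, hPm, hPsm, hQm, hQsm, evalM_Pmat, evalM_Qdesc, evalM_Pmat,
      evalM_Qasc] at e1
    exact e1
  have hPsets : {z : ℂ | (monicMatPolyEval pstar Ps z).det = 0}
      = {z : ℂ | (monicMatPolyEval p A z).det = 0} := by
    ext z
    simp only [Set.mem_setOf_eq]
    constructor
    · intro hdet
      obtain ⟨v, hv, hv0⟩ :=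
        (Matrix.exists_mulVec_eq_zero_iff (M := (monicMatPolyEval pstar Ps z)ᵀ)).mpr
        (by rw [Matrix.det_transpose]; exact hdet)
      have hz : (monicMatPolyEval p A z)ᵀ *ᵥ ((maPolyEvalDesc qstar Qs z)ᵀ *ᵥ v) = 0 := by
        rw [Matrix.mulVec_mulVec, ← Matrix.transpose_mul, hrelz z, Matrix.transpose_mul,
          ← Matrix.mulVec_mulVec, hv0, Matrix.mulVec_zero]
      have hne : (maPolyEvalDesc qstar Qs z)ᵀ *ᵥ v ≠ 0 := by
        intro h0
        exact hv (rank_cols_inj _ _ (hleft z) v hv0 h0)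
      have : (monicMatPolyEval p A z)ᵀ.det = 0 :=
        Matrix.exists_mulVec_eq_zero_iff.mp ⟨_, hne, hz⟩
      rwa [Matrix.det_transpose] at this
    · intro hdet
      obtain ⟨v, hv, hv0⟩ := Matrix.exists_mulVec_eq_zero_iff.mpr hdet
      have hz : monicMatPolyEval pstar Ps z *ᵥ (maPolyEvalAsc q C z *ᵥ v) = 0 := by
        rw [Matrix.mulVec_mulVec, ← hrelz z, ← Matrix.mulVec_mulVec, hv0, Matrix.mulVec_zero]
      have hne : maPolyEvalAsc q C z *ᵥ v ≠ 0 := by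
        intro h0
        exact hv (rank_stack_inj _ _ (hright z) v hv0 h0)
      exact Matrix.exists_mulVec_eq_zero_iff.mp ⟨_, hne, hz⟩
  have hQsets : {z : ℂ | (maPolyEvalDesc qstar Qs z).det = 0}
      = {z : ℂ | (maPolyEvalAsc q C z).det = 0} := by
    ext z
    simp only [Set.mem_setOf_eq]
    constructor
    · intro hdet
      obtain ⟨v, hv, hv0⟩ :=
        (Matrix.exists_mulVec_eq_zero_iff (M := (maPolyEvalDesc qstar Qs z)ᵀ)).mpr
        (by rw [Matrix.det_transpose]; exact hdet)
      have hz : (maPolyEvalAsc q C z)ᵀ *ᵥ ((monicMatPolyEval pstar Ps z)ᵀ *ᵥ v) = 0 := by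
        rw [Matrix.mulVec_mulVec, ← Matrix.transpose_mul, ← hrelz z, Matrix.transpose_mul,
          ← Matrix.mulVec_mulVec, hv0, Matrix.mulVec_zero]
      have hne : (monicMatPolyEval pstar Ps z)ᵀ *ᵥ v ≠ 0 := by
        intro h0
        exact hv (rank_cols_inj _ _ (hleft z) v h0 hv0)
      have : (maPolyEvalAsc q C z)ᵀ.det = 0 :=
        Matrix.exists_mulVec_eq_zero_iff.mp ⟨_, hne, hz⟩
      rwa [Matrix.det_transpose] at this
    · intro hdet
      obtain ⟨v, hv, hv0⟩ := Matrix.exists_mulVec_eq_zero_iff.mpr hdet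
      have hz : maPolyEvalDesc qstar Qs z *ᵥ (monicMatPolyEval p A z *ᵥ v) = 0 := by
        rw [Matrix.mulVec_mulVec, hrelz z, ← Matrix.mulVec_mulVec, hv0, Matrix.mulVec_zero]
      have hne : monicMatPolyEval p A z *ᵥ v ≠ 0 := by
        intro h0
        exact hv (rank_stack_inj _ _ (hright z) v h0 hv0)
      exact Matrix.exists_mulVec_eq_zero_iff.mp ⟨_, hne, hz⟩
  exact ⟨hppstar, hqqstar, hQ0Cq, hPsets, hQsets⟩
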